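/- arXiv:2106.13713 — 3 statements merged into one kernel-verified Lean document; each statement's English description precedes it below -/
import Mathlib

section
/- Let ξ, η, x₀ be real with η ≠ 0, and let (x,t) ∈ ℝ² be a point with 4tξ + x - x₀ ≠ 0. Then the one-positon function q(x,t) = 2η · exp(-4it(ξ² - η²) - 2ixξ) · csch(2η(4tξ + x - x₀)) satisfies the defocusing nonlinear Schrödinger equation i·∂q/∂t + ∂²q/∂x² - 2|q|²q = 0 at (x,t). In particular, if additionally ξ ≥ 0 and x₀ < 0, then 4tξ + x - x₀ > 0 for all x ≥ 0 and t ≥ 0, so q is smooth on the closed quarter-plane {x ≥ 0, t ≥ 0} and solves the defocusing NLS equation everywhere there. -/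
open Complex

/-- The one-positon profile of the defocusing NLS equation:
`q(x,t) = 2η · exp(-4it(ξ² - η²) - 2ixξ) · csch(2η(4tξ + x - x₀))`. -/
noncomputable def positonNLS (ξ η x₀ : ℝ) (x t : ℝ) : ℂ :=
  2 * (η : ℂ) * Complex.exp (-4 * Complex.I * (t : ℂ) * ((ξ : ℂ) ^ 2 - (η : ℂ) ^ 2)
      - 2 * Complex.I * (x : ℂ) * (ξ : ℂ))
    * ((Real.sinh (2 * η * (4 * t * ξ + x - x₀)) : ℂ))⁻¹

/-- The defocusing NLS equation `i qₜ + qₓₓ - 2|q|² q = 0` holds for `q` at the point `(x,t)`. -/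
def SolvesDefocusingNLSAt (q : ℝ → ℝ → ℂ) (x t : ℝ) : Prop :=
  Complex.I * deriv (fun s : ℝ => q x s) t
    + deriv (fun s : ℝ => deriv (fun u : ℝ => q u t) s) x
    - 2 * ((‖q x t‖ : ℝ) : ℂ) ^ 2 * q x t = 0

/-- Auxiliary: the `x`-derivative of the positon profile. -/
noncomputable def positonX (ξ η x₀ : ℝ) (x t : ℝ) : ℂ :=
  2 * (η : ℂ) * Complex.exp (-4 * Complex.I * (t : ℂ) * ((ξ : ℂ) ^ 2 - (η : ℂ) ^ 2)
      - 2 * Complex.I * (x : ℂ) * (ξ : ℂ)) *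
    ((-2 * Complex.I * ξ) * ((Real.sinh (2*η*(4*t*ξ+x-x₀)) : ℂ))⁻¹
      - 2 * η * ((Real.cosh (2*η*(4*t*ξ+x-x₀)) : ℂ)) * (((Real.sinh (2*η*(4*t*ξ+x-x₀)) : ℂ))^2)⁻¹)

lemma positon_sinh_ne (ξ η x₀ t s : ℝ) (hη : η ≠ 0) (hs : 4*t*ξ+s-x₀ ≠ 0) :
    Real.sinh (2*η*(4*t*ξ+s-x₀)) ≠ 0 := by
  rw [ne_eq, Real.sinh_eq_zero]
  exact mul_ne_zero (mul_ne_zero two_ne_zero hη) hs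

lemma hasDerivAt_positon_x (ξ η x₀ t : ℝ) (hη : η ≠ 0) (s : ℝ) (hs : 4*t*ξ+s-x₀ ≠ 0) :
    HasDerivAt (fun u : ℝ => positonNLS ξ η x₀ u t) (positonX ξ η x₀ s t) s := by
  have hsinh := positon_sinh_ne ξ η x₀ t s hη hs
  have hu : HasDerivAt (fun u : ℝ => (u : ℂ)) 1 s := (hasDerivAt_id s).ofReal_comp
  have hθ : HasDerivAt (fun u : ℝ => -4 * Complex.I * (t : ℂ) * ((ξ:ℂ)^2 - (η:ℂ)^2)
      - 2 * Complex.I * (u : ℂ) * (ξ:ℂ)) (-(2 * Complex.I * 1 * ξ)) s :=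
    HasDerivAt.const_sub _ ((hu.const_mul (2 * Complex.I)).mul_const (ξ:ℂ))
  have hE := (hθ.cexp).const_mul (2 * (η:ℂ))
  have hr : HasDerivAt (fun u : ℝ => 2*η*(4*t*ξ+u-x₀)) (2*η*1) s :=
    (((hasDerivAt_id s).const_add (4*t*ξ)).sub_const x₀).const_mul (2*η)
  have hSi : HasDerivAt (fun u : ℝ => (Real.sinh (2*η*(4*t*ξ+u-x₀)))⁻¹)
      (-(Real.cosh (2*η*(4*t*ξ+s-x₀)) * (2*η*1)) / (Real.sinh (2*η*(4*t*ξ+s-x₀)))^2) s :=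
    (hr.sinh).inv hsinh
  have hSiC := hSi.ofReal_comp
  simp only [Complex.ofReal_inv] at hSiC
  have := hE.mul hSiC
  simp only [positonNLS, positonX]
  convert this using 1
  · rfl
  · rfl
  push_cast
  field_simp
  ring

lemma hasDerivAt_positon_t (ξ η x₀ x : ℝ) (hη : η ≠ 0) (t : ℝ) (ht : 4*t*ξ+x-x₀ ≠ 0) :
    HasDerivAt (fun s : ℝ => positonNLS ξ η x₀ x s)
      (2 * (η:ℂ) * Complex.exp (-4 * Complex.I * (t : ℂ) * ((ξ:ℂ)^2 - (η:ℂ)^2)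
          - 2 * Complex.I * (x : ℂ) * (ξ:ℂ)) *
        ((-4 * Complex.I * ((ξ:ℂ)^2 - (η:ℂ)^2)) * ((Real.sinh (2*η*(4*t*ξ+x-x₀)) : ℂ))⁻¹
          - 8 * η * ξ * ((Real.cosh (2*η*(4*t*ξ+x-x₀)) : ℂ))
              * (((Real.sinh (2*η*(4*t*ξ+x-x₀)) : ℂ))^2)⁻¹)) t := by
  have hsinh := positon_sinh_ne ξ η x₀ t x hη ht
  have hu : HasDerivAt (fun s : ℝ => (s : ℂ)) 1 t := (hasDerivAt_id t).ofReal_comp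
  have hθ : HasDerivAt (fun s : ℝ => -4 * Complex.I * (s : ℂ) * ((ξ:ℂ)^2 - (η:ℂ)^2)
      - 2 * Complex.I * (x : ℂ) * (ξ:ℂ)) (-4 * Complex.I * 1 * ((ξ:ℂ)^2 - (η:ℂ)^2)) t :=
    ((hu.const_mul (-4 * Complex.I)).mul_const _).sub_const _
  have hE := (hθ.cexp).const_mul (2 * (η:ℂ))
  have hr : HasDerivAt (fun s : ℝ => 2*η*(4*s*ξ+x-x₀)) (2*η*(4*1*ξ)) t := by
    exact ((((hasDerivAt_id t).const_mul 4).mul_const ξ).add_const x |>.sub_const x₀).const_mul (2*η)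
  have hSi : HasDerivAt (fun s : ℝ => (Real.sinh (2*η*(4*s*ξ+x-x₀)))⁻¹)
      (-(Real.cosh (2*η*(4*t*ξ+x-x₀)) * (2*η*(4*1*ξ))) / (Real.sinh (2*η*(4*t*ξ+x-x₀)))^2) t :=
    (hr.sinh).inv hsinh
  have hSiC := hSi.ofReal_comp
  simp only [Complex.ofReal_inv] at hSiC
  have := hE.mul hSiC
  simp only [positonNLS]
  convert this using 1
  · rfl
  · rfl
  push_cast
  field_simp
  ring

lemma hasDerivAt_positonX_x (ξ η x₀ t : ℝ) (hη : η ≠ 0) (s : ℝ) (hs : 4*t*ξ+s-x₀ ≠ 0) :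
    HasDerivAt (fun u : ℝ => positonX ξ η x₀ u t)
      (2 * (η:ℂ) * Complex.exp (-4 * Complex.I * (t : ℂ) * ((ξ:ℂ)^2 - (η:ℂ)^2)
          - 2 * Complex.I * (s : ℂ) * (ξ:ℂ)) *
        ((-2*Complex.I*ξ)^2 * ((Real.sinh (2*η*(4*t*ξ+s-x₀)) : ℂ))⁻¹
          - 4*η*(-2*Complex.I*ξ) * ((Real.cosh (2*η*(4*t*ξ+s-x₀)) : ℂ))
              * (((Real.sinh (2*η*(4*t*ξ+s-x₀)) : ℂ))^2)⁻¹
          - 4*(η:ℂ)^2 * ((Real.sinh (2*η*(4*t*ξ+s-x₀)) : ℂ))⁻¹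
          + 8*(η:ℂ)^2 * ((Real.cosh (2*η*(4*t*ξ+s-x₀)) : ℂ))^2
              * (((Real.sinh (2*η*(4*t*ξ+s-x₀)) : ℂ))^3)⁻¹)) s := by
  have hsinh := positon_sinh_ne ξ η x₀ t s hη hs
  have hsinhC : ((Real.sinh (2*η*(4*t*ξ+s-x₀)) : ℂ)) ≠ 0 := by exact_mod_cast hsinh
  have hu : HasDerivAt (fun u : ℝ => (u : ℂ)) 1 s := (hasDerivAt_id s).ofReal_comp
  have hθ : HasDerivAt (fun u : ℝ => -4 * Complex.I * (t : ℂ) * ((ξ:ℂ)^2 - (η:ℂ)^2)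
      - 2 * Complex.I * (u : ℂ) * (ξ:ℂ)) (-(2 * Complex.I * 1 * ξ)) s :=
    HasDerivAt.const_sub _ ((hu.const_mul (2 * Complex.I)).mul_const (ξ:ℂ))
  have hE := (hθ.cexp).const_mul (2 * (η:ℂ))
  have hr : HasDerivAt (fun u : ℝ => 2*η*(4*t*ξ+u-x₀)) (2*η*1) s :=
    (((hasDerivAt_id s).const_add (4*t*ξ)).sub_const x₀).const_mul (2*η)
  have hC : HasDerivAt (fun u : ℝ => ((Real.cosh (2*η*(4*t*ξ+u-x₀)) : ℂ)))
      ((Real.sinh (2*η*(4*t*ξ+s-x₀)) * (2*η*1) : ℝ) : ℂ) s := (hr.cosh).ofReal_comp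
  have hT1 := ((hr.sinh).inv hsinh).ofReal_comp.const_mul (-2 * Complex.I * (ξ:ℂ))
  simp only [Pi.inv_apply, Complex.ofReal_inv] at hT1
  have hs2inv := (((hr.sinh).pow 2).inv (pow_ne_zero 2 hsinh)).ofReal_comp
  simp only [Pi.inv_apply, Pi.pow_apply, Complex.ofReal_inv, Complex.ofReal_pow] at hs2inv
  have hT2 := (hC.const_mul (2 * (η:ℂ))).mul hs2inv
  have hg := hT1.sub hT2
  have := hE.mul hg
  simp only [positonX]
  convert this using 1
  · rfl
  · rfl
  have hS0 : Complex.sinh (2*(η:ℂ)*(4*(t:ℂ)*(ξ:ℂ)+(s:ℂ)-(x₀:ℂ))) ≠ 0 := by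
    have h' : ((Real.sinh (2*η*(4*t*ξ+s-x₀)) : ℝ) : ℂ) ≠ 0 := by exact_mod_cast hsinh
    rw [Complex.ofReal_sinh] at h'
    convert h' using 2
    push_cast
    ring
  simp only [Pi.sub_apply, Pi.mul_apply]
  push_cast
  field_simp [hS0]
  ring

/-- The core algebraic identity behind the NLS computation. -/
lemma positon_key (η ξ S C E : ℂ) (hS : S ≠ 0) (hC : C^2 = S^2+1) :
    Complex.I * (2*η*E*((-4*Complex.I*(ξ^2-η^2))*S⁻¹ - 8*η*ξ*C*(S^2)⁻¹))
    + 2*η*E*((-2*Complex.I*ξ)^2*S⁻¹ - 4*η*(-2*Complex.I*ξ)*C*(S^2)⁻¹ - 4*η^2*S⁻¹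
        + 8*η^2*C^2*(S^3)⁻¹)
    - 2*(4*η^2*(S^2)⁻¹)*(2*η*E*S⁻¹) = 0 := by
  have hS1 : S * S⁻¹ = 1 := mul_inv_cancel₀ hS
  linear_combination (8*η^3*E*S⁻¹) * Complex.I_sq + (16*η^3*E*S⁻¹^3) * hC
    + (16*η^3*E*S⁻¹*(S*S⁻¹+1)) * hS1

lemma positon_abs_sq (ξ η x₀ x t : ℝ) :
    (‖positonNLS ξ η x₀ x t‖)^2
      = 4*η^2 * ((Real.sinh (2*η*(4*t*ξ+x-x₀)))^2)⁻¹ := by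
  have hθ : (-4 * Complex.I * (t : ℂ) * ((ξ : ℂ) ^ 2 - (η : ℂ) ^ 2)
      - 2 * Complex.I * (x : ℂ) * (ξ : ℂ))
      = ((-4*t*(ξ^2-η^2) - 2*x*ξ : ℝ) : ℂ) * Complex.I := by push_cast; ring
  rw [positonNLS, hθ]
  rw [norm_mul, norm_mul, Complex.norm_exp_ofReal_mul_I, norm_inv, Complex.norm_real, Real.norm_eq_abs]
  have : ‖(2 * (η:ℂ))‖ = 2 * |η| := by
    rw [norm_mul]
    simp
  rw [this]
  rw [mul_one, mul_pow, mul_pow, inv_pow, _root_.sq_abs, _root_.sq_abs]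
  norm_num

lemma positon_solves_at (ξ η x₀ : ℝ) (hη : η ≠ 0) (x t : ℝ) (h : 4 * t * ξ + x - x₀ ≠ 0) :
    SolvesDefocusingNLSAt (positonNLS ξ η x₀) x t := by
  have hDt := (hasDerivAt_positon_t ξ η x₀ x hη t h).deriv
  have hne : ∀ᶠ s in nhds x, 4*t*ξ+s-x₀ ≠ 0 := by
    have hc : ContinuousAt (fun s : ℝ => 4*t*ξ+s-x₀) x := by fun_prop
    exact hc.eventually_ne h
  have hEq : (fun s : ℝ => deriv (fun u : ℝ => positonNLS ξ η x₀ u t) s)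
      =ᶠ[nhds x] (fun s : ℝ => positonX ξ η x₀ s t) := by
    filter_upwards [hne] with s hs
    exact (hasDerivAt_positon_x ξ η x₀ t hη s hs).deriv
  have hDxx : deriv (fun s : ℝ => deriv (fun u : ℝ => positonNLS ξ η x₀ u t) s) x
      = deriv (fun s : ℝ => positonX ξ η x₀ s t) x := hEq.deriv_eq
  rw [SolvesDefocusingNLSAt, hDt, hDxx, (hasDerivAt_positonX_x ξ η x₀ t hη x h).deriv]
  have habs : ((‖positonNLS ξ η x₀ x t‖ : ℝ) : ℂ)^2
      = ((4*η^2 * ((Real.sinh (2*η*(4*t*ξ+x-x₀)))^2)⁻¹ : ℝ) : ℂ) := by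
    rw [← Complex.ofReal_pow, positon_abs_sq]
  rw [habs]
  have hsinh := positon_sinh_ne ξ η x₀ t x hη h
  have hS0 : Complex.sinh (2*(η:ℂ)*(4*(t:ℂ)*(ξ:ℂ)+(x:ℂ)-(x₀:ℂ))) ≠ 0 := by
    have h' : ((Real.sinh (2*η*(4*t*ξ+x-x₀)) : ℝ) : ℂ) ≠ 0 := by exact_mod_cast hsinh
    rw [Complex.ofReal_sinh] at h'
    convert h' using 2
    push_cast
    ring
  have hkey := positon_key (η:ℂ) (ξ:ℂ)
    (Complex.sinh (2*(η:ℂ)*(4*(t:ℂ)*(ξ:ℂ)+(x:ℂ)-(x₀:ℂ))))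
    (Complex.cosh (2*(η:ℂ)*(4*(t:ℂ)*(ξ:ℂ)+(x:ℂ)-(x₀:ℂ))))
    (Complex.exp (-4 * Complex.I * (t : ℂ) * ((ξ:ℂ)^2 - (η:ℂ)^2)
      - 2 * Complex.I * (x : ℂ) * (ξ:ℂ)))
    hS0 (Complex.cosh_sq _)
  rw [positonNLS]
  push_cast
  linear_combination hkey

/-- For real `ξ, η, x₀` with `η ≠ 0`, the one-positon function satisfies the defocusing
nonlinear Schrödinger equation at every point `(x,t)` with `4tξ + x - x₀ ≠ 0`.  In particular,
if moreover `ξ ≥ 0` and `x₀ < 0`, then `4tξ + x - x₀ > 0` on the closed quarter-plane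
`{x ≥ 0, t ≥ 0}` and the positon solves defocusing NLS everywhere there. -/
theorem positon_solves_defocusing_NLS (ξ η x₀ : ℝ) (hη : η ≠ 0) :
    (∀ x t : ℝ, 4 * t * ξ + x - x₀ ≠ 0 → SolvesDefocusingNLSAt (positonNLS ξ η x₀) x t) ∧
    (ξ ≥ 0 → x₀ < 0 → ∀ x t : ℝ, 0 ≤ x → 0 ≤ t →
      4 * t * ξ + x - x₀ > 0 ∧ SolvesDefocusingNLSAt (positonNLS ξ η x₀) x t) := by
  constructor
  · exact fun x t h => positon_solves_at ξ η x₀ hη x t h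
  · intro hξ hx₀ x t hx ht
    have hpos : 4 * t * ξ + x - x₀ > 0 := by
      have h1 : 0 ≤ 4 * t * ξ := by positivity
      linarith
    exact ⟨hpos, positon_solves_at ξ η x₀ hη x t hpos.ne'⟩
end

section
/- Let l be a filter on ℂ along which |k| → ∞ (i.e., l is finer than the pullback of the atTop filter under the norm). Let λ ∈ {1,-1}, let u, v ∈ ℂ and let I ∈ ℝ. Suppose a, b : ℂ → ℂ satisfy, along l, a(k) = 1 - (λ I)/(2ik) + O(1/|k|²) and b(k) = u/(2ik) - (v + λ u I)/(2ik)² + O(1/|k|³). Then, along l, b(k)/a(k) = u/(2ik) + v/(4k²) + O(1/|k|³); in particular all terms involving I cancel from the expansion of the ratio b/a. -/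
open Complex Filter Asymptotics Topology

/-- Cancellation of the integral `I = ∫₀^∞|q₀|²` in the large-`k` expansion of the ratio of
spectral functions: if `a(k) = 1 - λI/(2ik) + O(1/|k|²)` and
`b(k) = u/(2ik) - (v + λuI)/(2ik)² + O(1/|k|³)` along a filter `l` on which `|k| → ∞`, then
`b(k)/a(k) = u/(2ik) + v/(4k²) + O(1/|k|³)` along `l`. -/
theorem ratio_expansion_cancellation
    (l : Filter ℂ) (hl : Tendsto (fun k : ℂ => ‖k‖) l atTop)
    (lam : ℂ) (hlam : lam = 1 ∨ lam = -1) (u v : ℂ) (J : ℝ)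
    (a b : ℂ → ℂ)
    (ha : (fun k : ℂ => a k - (1 - lam * (J : ℂ) / (2 * Complex.I * k)))
      =O[l] fun k : ℂ => (‖k‖ ^ 2)⁻¹)
    (hb : (fun k : ℂ => b k
        - (u / (2 * Complex.I * k) - (v + lam * u * (J : ℂ)) / (2 * Complex.I * k) ^ 2))
      =O[l] fun k : ℂ => (‖k‖ ^ 3)⁻¹) :
    (fun k : ℂ => b k / a k - (u / (2 * Complex.I * k) + v / (4 * k ^ 2)))
      =O[l] fun k : ℂ => (‖k‖ ^ 3)⁻¹ := by
  set A : ℂ → ℂ := fun k => 1 - lam * (J : ℂ) / (2 * Complex.I * k) with hA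
  set B : ℂ → ℂ := fun k =>
    u / (2 * Complex.I * k) - (v + lam * u * (J : ℂ)) / (2 * Complex.I * k) ^ 2 with hB
  set t : ℂ → ℂ := fun k => u / (2 * Complex.I * k) + v / (4 * k ^ 2) with ht
  -- eventually ‖k‖ ≥ 1
  have hk1 : ∀ᶠ k in l, (1 : ℝ) ≤ ‖k‖ := hl.eventually_ge_atTop 1
  -- k⁻¹ tends to 0
  have hinv : Tendsto (fun k : ℂ => k⁻¹) l (𝓝 0) := by
    rw [tendsto_zero_iff_norm_tendsto_zero]
    simpa [norm_inv, Function.comp_def] using tendsto_inv_atTop_zero.comp hl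
  -- a tends to 1
  have haA : Tendsto (fun k => a k - A k) l (𝓝 0) := by
    refine ha.trans_tendsto ?_
    exact tendsto_inv_atTop_zero.comp ((tendsto_pow_atTop (by norm_num)).comp hl)
  have hAt : Tendsto A l (𝓝 1) := by
    have : Tendsto (fun k : ℂ => lam * (J : ℂ) / (2 * Complex.I * k)) l (𝓝 0) := by
      have := hinv.const_mul (lam * (J : ℂ) / (2 * Complex.I))
      simpa [div_eq_mul_inv, mul_inv, mul_comm, mul_assoc, mul_left_comm] using this
    simpa using (tendsto_const_nhds (x := (1 : ℂ))).sub this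
  have hat : Tendsto a l (𝓝 1) := by
    have := haA.add hAt
    simpa using this
  -- a⁻¹ is bounded
  have hainv : (fun k => (a k)⁻¹) =O[l] (fun _ : ℂ => (1 : ℝ)) := by
    have : Tendsto (fun k => (a k)⁻¹) l (𝓝 1⁻¹) := hat.inv₀ one_ne_zero
    exact this.isBigO_one ℝ
  -- eventually a ≠ 0
  have hane : ∀ᶠ k in l, a k ≠ 0 := hat.eventually_ne one_ne_zero
  -- t = O(‖k‖⁻¹)
  have hkinv : (fun k : ℂ => k⁻¹) =O[l] fun k : ℂ => ‖k‖⁻¹ := by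
    refine (isBigO_refl (fun k : ℂ => k⁻¹) l).trans ?_
    exact (isBigO_refl _ l).norm_right.congr' (by rfl) (by filter_upwards with k; simp)
  have hk2le : (fun k : ℂ => ((‖k‖ : ℝ) ^ 2)⁻¹) =O[l] fun k : ℂ => ‖k‖⁻¹ := by
    rw [isBigO_iff]
    refine ⟨1, ?_⟩
    filter_upwards [hk1] with k hk
    have h0 : (0 : ℝ) < ‖k‖ := lt_of_lt_of_le one_pos hk
    rw [Real.norm_eq_abs, Real.norm_eq_abs, _root_.abs_of_pos (inv_pos.mpr (pow_pos h0 2)),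
      _root_.abs_of_pos (inv_pos.mpr h0), one_mul,
      inv_le_inv₀ (by positivity) h0]
    nlinarith
  have hT : t =O[l] fun k : ℂ => ‖k‖⁻¹ := by
    have h1 : (fun k : ℂ => u / (2 * Complex.I * k)) =O[l] fun k : ℂ => ‖k‖⁻¹ := by
      have := hkinv.const_mul_left (u / (2 * Complex.I))
      refine this.congr' ?_ (by rfl)
      filter_upwards with k
      rcases eq_or_ne k 0 with rfl | hk
      · simp
      · field_simp
    have h2 : (fun k : ℂ => v / (4 * k ^ 2)) =O[l] fun k : ℂ => ‖k‖⁻¹ := by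
      refine IsBigO.trans ?_ hk2le
      rw [isBigO_iff]
      refine ⟨‖v‖ / 4, Filter.Eventually.of_forall fun k => ?_⟩
      rcases eq_or_ne k 0 with rfl | hk
      · simp
      · have : ‖v / (4 * k ^ 2)‖ = ‖v‖ / 4 * (‖k‖ ^ 2)⁻¹ := by
          rw [norm_div, norm_mul, norm_pow]
          simp [div_eq_mul_inv, mul_inv]
          ring
        have hk0 : (0 : ℝ) < ‖k‖ := norm_pos_iff.mpr hk
        rw [this, Real.norm_eq_abs, _root_.abs_of_pos (inv_pos.mpr (pow_pos hk0 2))]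
    exact h1.add h2
  -- main algebraic cancellation: B - t*A = (v*lam*J/(8*I)) * (k^3)⁻¹
  have hmain : (fun k => B k - t k * A k) =O[l] fun k : ℂ => (‖k‖ ^ 3)⁻¹ := by
    have key : ∀ k : ℂ, B k - t k * A k = v * lam * (J : ℂ) / (8 * Complex.I) * (k ^ 3)⁻¹ := by
      intro k
      have h1 : Complex.I⁻¹ ^ 2 = -1 := by
        rw [Complex.inv_I]; simpa using Complex.I_sq
      simp only [hB, ht, hA, div_eq_mul_inv, mul_inv, mul_pow, inv_pow]
      ring_nf
      simp only [h1, Complex.I_sq]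
      ring
    rw [isBigO_iff]
    refine ⟨‖v * lam * (J : ℂ) / (8 * Complex.I)‖, Filter.Eventually.of_forall fun k => ?_⟩
    rw [key k, norm_mul, norm_inv, norm_pow, Real.norm_eq_abs]
    exact mul_le_mul_of_nonneg_left (le_abs_self _) (norm_nonneg _)
  -- b - t*a = (b - B) + (B - t*A) - t*(a - A) = O(‖k‖³)⁻¹
  have hprod : (fun k => t k * (a k - A k)) =O[l] fun k : ℂ => (‖k‖ ^ 3)⁻¹ := by
    have := hT.mul ha
    refine this.trans (IsBigO.of_bound 1 ?_)
    filter_upwards with k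
    have e : ‖k‖⁻¹ * (‖k‖ ^ 2)⁻¹ = (‖k‖ ^ 3)⁻¹ := by
      rw [← mul_inv]; congr 1; ring
    calc ‖‖k‖⁻¹ * (‖k‖ ^ 2)⁻¹‖ = ‖k‖⁻¹ * (‖k‖ ^ 2)⁻¹ := by
          rw [Real.norm_eq_abs, _root_.abs_of_nonneg (by positivity)]
      _ = (‖k‖ ^ 3)⁻¹ := e
      _ ≤ 1 * ‖(‖k‖ ^ 3)⁻¹‖ := by
          rw [one_mul, Real.norm_eq_abs, _root_.abs_of_nonneg (by positivity)]
  have hsum : (fun k => b k - t k * a k) =O[l] fun k : ℂ => (‖k‖ ^ 3)⁻¹ := by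
    have := (hb.add hmain).sub hprod
    refine this.congr' (Filter.Eventually.of_forall fun k => ?_) (by rfl)
    simp only [hB]
    ring
  -- conclude
  have := hsum.mul hainv
  refine this.congr' (by filter_upwards [hane] with k hk; change (b k - t k * a k) * (a k)⁻¹ = b k / a k - t k; rw [div_eq_mul_inv, sub_mul, mul_assoc, mul_inv_cancel₀ hk, mul_one])
    (Filter.Eventually.of_forall fun k => by simp)
end

section
/- Let λ ∈ {1,-1}, let k ∈ ℂ with Im k ≥ 0, and let q₀ : [0,∞) → ℂ be continuous with ∫₀^∞ |q₀(y)| dy < ∞. Then there exists exactly one pair of bounded continuous functions φ₁, φ₂ : [0,∞) → ℂ satisfying, for all x ≥ 0, φ₁(x) = -∫_x^∞ e^{-2ik(x-y)} q₀(y) φ₂(y) dy and φ₂(x) = 1 - λ ∫_x^∞ conj(q₀(y)) φ₁(y) dy. -/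
open Complex MeasureTheory Set

namespace VolterraNLS

open Filter

/-- tail integral of `‖q₀‖`, clamped at 0 so it is defined on all of `ℝ`. -/
noncomputable def Q (q₀ : ℝ → ℂ) (x : ℝ) : ℝ := ∫ y in Ioi (max x 0), ‖q₀ y‖

lemma max_max (x : ℝ) : max (max x 0) 0 = max x 0 := max_eq_left (le_max_right _ _)

lemma Q_max (q₀ : ℝ → ℂ) (x : ℝ) : Q q₀ (max x 0) = Q q₀ x := by
  simp [Q, max_max]

section main

variable {q₀ : ℝ → ℂ} (hq₀ : Continuous q₀) (hint : IntegrableOn q₀ (Ici 0))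

lemma hn (hint : IntegrableOn q₀ (Ici 0)) : IntegrableOn (fun y => ‖q₀ y‖) (Ici 0) := hint.norm

lemma hnIoi (hint : IntegrableOn q₀ (Ici 0)) {x : ℝ} (hx : 0 ≤ x) :
    IntegrableOn (fun y => ‖q₀ y‖) (Ioi x) :=
  (hn hint).mono_set (Ioi_subset_Ici_iff.mpr (le_refl x) |>.trans (Ici_subset_Ici.mpr hx))

lemma Q_nonneg (x : ℝ) : 0 ≤ Q q₀ x :=
  setIntegral_nonneg measurableSet_Ioi (fun y _ => norm_nonneg _)

lemma Q_anti (hint : IntegrableOn q₀ (Ici 0)) : Antitone (Q q₀) := by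
  intro a b hab
  apply setIntegral_mono_set (hnIoi hint (le_max_right a 0))
  · exact Filter.Eventually.of_forall fun y => norm_nonneg _
  · exact HasSubset.Subset.eventuallyLE (Ioi_subset_Ioi (max_le_max hab le_rfl))

lemma Q_le_Q0 (hint : IntegrableOn q₀ (Ici 0)) (x : ℝ) : Q q₀ x ≤ Q q₀ 0 := by
  rw [← Q_max q₀ x]
  exact Q_anti hint (by simp)

/-- primitive of `‖q₀‖` from 0 -/
noncomputable def H (q₀ : ℝ → ℂ) (t : ℝ) : ℝ := ∫ y in (0:ℝ)..t, ‖q₀ y‖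

lemma H_cont (hq₀ : Continuous q₀) : Continuous (H q₀) :=
  intervalIntegral.continuous_primitive (fun a b => (hq₀.norm.intervalIntegrable a b)) 0

lemma Q_eq (hint : IntegrableOn q₀ (Ici 0)) (x : ℝ) :
    Q q₀ x = Q q₀ 0 - H q₀ (max x 0) := by
  have key : ∀ t : ℝ, 0 ≤ t → Q q₀ t = Q q₀ 0 - H q₀ t := by
    intro t ht
    have hsplit : Q q₀ 0 = H q₀ t + Q q₀ t := by
      have hu : Ioc (0:ℝ) t ∪ Ioi t = Ioi 0 := Ioc_union_Ioi_eq_Ioi ht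
      have h1 : IntegrableOn (fun y => ‖q₀ y‖) (Ioc 0 t) :=
        (hnIoi hint le_rfl).mono_set Ioc_subset_Ioi_self
      have h2 : IntegrableOn (fun y => ‖q₀ y‖) (Ioi t) := hnIoi hint ht
      have := setIntegral_union (f := fun y => ‖q₀ y‖) (μ := volume)
        (Set.Ioc_disjoint_Ioi le_rfl) measurableSet_Ioi h1 h2
      rw [hu] at this
      have hH : H q₀ t = ∫ y in Ioc (0:ℝ) t, ‖q₀ y‖ := intervalIntegral.integral_of_le ht
      have hQ0 : Q q₀ 0 = ∫ y in Ioi (0:ℝ), ‖q₀ y‖ := by simp [Q]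
      have hQt : Q q₀ t = ∫ y in Ioi t, ‖q₀ y‖ := by simp [Q, max_eq_left ht]
      rw [hQ0, hH, hQt, this]
    linarith
  rw [← Q_max q₀ x]
  exact key _ (le_max_right x 0)

lemma Q_cont (hq₀ : Continuous q₀) (hint : IntegrableOn q₀ (Ici 0)) : Continuous (Q q₀) := by
  have : Q q₀ = fun x => Q q₀ 0 - H q₀ (max x 0) := funext (Q_eq hint)
  rw [this]
  exact continuous_const.sub ((H_cont hq₀).comp (continuous_id.max continuous_const))

lemma Q_hasDeriv (hq₀ : Continuous q₀) (hint : IntegrableOn q₀ (Ici 0)) {y : ℝ} (hy : 0 < y) :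
    HasDerivAt (Q q₀) (-‖q₀ y‖) y := by
  have hH : HasDerivAt (H q₀) ‖q₀ y‖ y :=
    intervalIntegral.integral_hasDerivAt_right (hq₀.norm.intervalIntegrable 0 y)
      (hq₀.norm.aestronglyMeasurable.stronglyMeasurableAtFilter)
      (hq₀.norm.continuousAt)
  have h2 : HasDerivAt (fun x => Q q₀ 0 - H q₀ (max x 0)) (-‖q₀ y‖) y := by
    have heq : (fun x => Q q₀ 0 - H q₀ (max x 0)) =ᶠ[nhds y] fun x => Q q₀ 0 - H q₀ x := by
      filter_upwards [eventually_gt_nhds hy] with x hx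
      rw [max_eq_left hx.le]
    have := ((hasDerivAt_const y (Q q₀ 0)).sub hH).congr_of_eventuallyEq heq
    simpa using this
  have : Q q₀ = fun x => Q q₀ 0 - H q₀ (max x 0) := funext (Q_eq hint)
  rw [this]
  exact h2

lemma Q_tendsto (hint : IntegrableOn q₀ (Ici 0)) :
    Tendsto (Q q₀) atTop (nhds 0) := by
  have h1 : Tendsto (fun t : ℝ => H q₀ t) atTop (nhds (Q q₀ 0)) := by
    have := intervalIntegral_tendsto_integral_Ioi (μ := volume) (f := fun y => ‖q₀ y‖) 0
      (hnIoi hint le_rfl) tendsto_id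
    simpa [H, Q] using this
  have h2 : Tendsto (fun x : ℝ => Q q₀ 0 - H q₀ (max x 0)) atTop (nhds 0) := by
    have hmax : Tendsto (fun x : ℝ => max x 0) atTop atTop :=
      tendsto_atTop_mono (fun x => le_max_left x 0) tendsto_id
    have := (tendsto_const_nhds (x := Q q₀ 0)).sub (h1.comp hmax)
    simpa using this
  exact h2.congr (fun x => (Q_eq hint x).symm)

/-- integrability of `‖q₀‖ e^{2Q}` on tails -/
lemma integrable_qexp (hq₀ : Continuous q₀) (hint : IntegrableOn q₀ (Ici 0)) {x : ℝ} (hx : 0 ≤ x) :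
    IntegrableOn (fun y => ‖q₀ y‖ * Real.exp (2 * Q q₀ y)) (Ioi x) := by
  apply Integrable.mono' ((hnIoi hint hx).mul_const (Real.exp (2 * Q q₀ 0)))
  · exact ((hq₀.norm.mul (continuous_const.mul (Q_cont hq₀ hint)).rexp)).aestronglyMeasurable
  · filter_upwards with y
    have hnn : (0:ℝ) ≤ ‖q₀ y‖ * Real.exp (2 * Q q₀ y) := by positivity
    rw [Real.norm_eq_abs, _root_.abs_of_nonneg hnn]
    have := Q_le_Q0 hint y
    have h2 : Real.exp (2 * Q q₀ y) ≤ Real.exp (2 * Q q₀ 0) := by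
      apply Real.exp_le_exp.mpr; linarith
    exact mul_le_mul_of_nonneg_left h2 (norm_nonneg _)

/-- the key contraction identity -/
lemma key_integral (hq₀ : Continuous q₀) (hint : IntegrableOn q₀ (Ici 0)) {x : ℝ} (hx : 0 ≤ x) :
    ∫ y in Ioi x, ‖q₀ y‖ * Real.exp (2 * Q q₀ y)
      = (Real.exp (2 * Q q₀ x) - 1) / 2 := by
  have hderiv : ∀ y ∈ Ioi x, HasDerivAt (fun t => -Real.exp (2 * Q q₀ t) / 2)
      (‖q₀ y‖ * Real.exp (2 * Q q₀ y)) y := by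
    intro y hy
    have hy0 : 0 < y := lt_of_le_of_lt hx hy
    have h1 : HasDerivAt (fun t => 2 * Q q₀ t) (2 * -‖q₀ y‖) y :=
      (Q_hasDeriv hq₀ hint hy0).const_mul 2
    have h2 : HasDerivAt (fun t => Real.exp (2 * Q q₀ t))
        (Real.exp (2 * Q q₀ y) * (2 * -‖q₀ y‖)) y := (Real.hasDerivAt_exp _).comp y h1
    have h3 := (h2.neg.div_const 2)
    have h4 : ‖q₀ y‖ * Real.exp (2 * Q q₀ y) = -(Real.exp (2 * Q q₀ y) * (2 * -‖q₀ y‖)) / 2 := by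
      ring
    rw [h4]
    exact h3
  have hcont : ContinuousWithinAt (fun t => -Real.exp (2 * Q q₀ t) / 2) (Ici x) x :=
    ((continuous_const.mul (Q_cont hq₀ hint)).rexp.neg.div_const 2).continuousWithinAt
  have htend : Tendsto (fun t => -Real.exp (2 * Q q₀ t) / 2) atTop (nhds (-1/2)) := by
    have := ((Q_tendsto hint).const_mul (2:ℝ))
    have h2 := (Real.continuous_exp.continuousAt.tendsto.comp (by simpa using this)).neg.div_const 2
    simpa using h2
  have := integral_Ioi_of_hasDerivAt_of_tendsto hcont hderiv (integrable_qexp hq₀ hint hx) htend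
  rw [this]
  ring



lemma re_aux (k : ℂ) (r : ℝ) : (-2 * I * k * (r:ℂ)).re = 2 * k.im * r := by
  simp [Complex.mul_re, Complex.mul_im]

lemma kernel_norm_le {k : ℂ} (hk : 0 ≤ k.im) {x y : ℝ} (hxy : x ≤ y) :
    ‖Complex.exp (-2 * I * k * ((x:ℂ) - (y:ℂ)))‖ ≤ 1 := by
  have : ((x:ℂ) - (y:ℂ)) = ((x - y : ℝ) : ℂ) := by push_cast; ring
  rw [Complex.norm_exp, this, re_aux]
  rw [Real.exp_le_one_iff]
  nlinarith

lemma kernel_split (k : ℂ) (x y : ℝ) :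
    Complex.exp (-2 * I * k * ((x:ℂ) - (y:ℂ)))
      = Complex.exp (-2 * I * k * (x:ℂ)) * Complex.exp (2 * I * k * (y:ℂ)) := by
  rw [← Complex.exp_add]
  ring_nf

lemma E_norm_le {k : ℂ} (hk : 0 ≤ k.im) {y : ℝ} (hy : 0 ≤ y) :
    ‖Complex.exp (2 * I * k * (y:ℂ))‖ ≤ 1 := by
  have h : (2 * I * k * (y:ℂ)) = -2 * I * k * ((0:ℂ) - (y:ℂ)) := by ring
  have := kernel_norm_le hk hy
  rw [h]
  simpa using kernel_norm_le hk hy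

lemma kernelx_norm (k : ℂ) (x : ℝ) :
    ‖Complex.exp (-2 * I * k * (x:ℂ))‖ = Real.exp (2 * k.im * x) := by
  rw [Complex.norm_exp, re_aux]

lemma tail_eq (F : ℝ → ℂ) (hFi : IntegrableOn F (Ioi 0)) {t : ℝ} (ht : 0 ≤ t) :
    ∫ y in Ioi t, F y = (∫ y in Ioi 0, F y) - ∫ y in (0:ℝ)..t, F y := by
  have hu : Ioc (0:ℝ) t ∪ Ioi t = Ioi 0 := Ioc_union_Ioi_eq_Ioi ht
  have h1 : IntegrableOn F (Ioc 0 t) := hFi.mono_set Ioc_subset_Ioi_self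
  have h2 : IntegrableOn F (Ioi t) := hFi.mono_set (Ioi_subset_Ioi ht)
  have hs := setIntegral_union (f := F) (μ := volume)
    (Set.Ioc_disjoint_Ioi le_rfl) measurableSet_Ioi h1 h2
  rw [hu] at hs
  rw [intervalIntegral.integral_of_le ht, hs]
  ring

lemma cont_tail (F : ℝ → ℂ) (hFc : Continuous F) (hFi : IntegrableOn F (Ioi 0)) :
    Continuous (fun x => ∫ y in Ioi (max x 0), F y) := by
  have heq : (fun x => ∫ y in Ioi (max x 0), F y)
      = fun x => (∫ y in Ioi 0, F y) - ∫ y in (0:ℝ)..(max x 0), F y := by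
    funext x
    exact tail_eq F hFi (le_max_right x 0)
  rw [heq]
  exact continuous_const.sub
    ((intervalIntegral.continuous_primitive (fun a b => hFc.intervalIntegrable a b) 0).comp
      (continuous_id.max continuous_const))


/-! ### The weighted integral operators on bounded continuous functions -/

abbrev X := BoundedContinuousFunction ℝ (ℂ × ℂ)

noncomputable def wC (q₀ : ℝ → ℂ) (y : ℝ) : ℂ := (Real.exp (2 * Q q₀ y) : ℂ)

lemma wC_norm (q₀ : ℝ → ℂ) (y : ℝ) : ‖wC q₀ y‖ = Real.exp (2 * Q q₀ y) := by
  rw [wC, Complex.norm_real, Real.norm_eq_abs, abs_of_pos (Real.exp_pos _)]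

lemma wC_cont (hq₀ : Continuous q₀) (hint : IntegrableOn q₀ (Ici 0)) :
    Continuous (wC q₀) :=
  Complex.continuous_ofReal.comp (continuous_const.mul (Q_cont hq₀ hint)).rexp

noncomputable def J1 (q₀ : ℝ → ℂ) (k : ℂ) (u : X) (x : ℝ) : ℂ :=
  ∫ y in Ioi x, Complex.exp (-2 * I * k * ((x:ℂ) - (y:ℂ))) * q₀ y * (wC q₀ y * (u y).2)

noncomputable def J2 (q₀ : ℝ → ℂ) (u : X) (x : ℝ) : ℂ :=
  ∫ y in Ioi x, (starRingEnd ℂ) (q₀ y) * (wC q₀ y * (u y).1)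

noncomputable def g1 (q₀ : ℝ → ℂ) (k : ℂ) (u : X) (y : ℝ) : ℂ :=
  Complex.exp (2 * I * k * (y:ℂ)) * q₀ y * (wC q₀ y * (u y).2)

/-- dominating function -/
lemma dom_integrable (hq₀ : Continuous q₀) (hint : IntegrableOn q₀ (Ici 0)) {x : ℝ} (hx : 0 ≤ x)
    (B : ℝ) : IntegrableOn (fun y => ‖q₀ y‖ * Real.exp (2 * Q q₀ y) * B) (Ioi x) :=
  (integrable_qexp hq₀ hint hx).mul_const B

lemma int_J1integrand (hq₀ : Continuous q₀) (hint : IntegrableOn q₀ (Ici 0))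
    {k : ℂ} (hk : 0 ≤ k.im) (u : X) {x : ℝ} (hx : 0 ≤ x) :
    IntegrableOn
      (fun y : ℝ => Complex.exp (-2 * I * k * ((x:ℂ) - (y:ℂ))) * q₀ y * (wC q₀ y * (u y).2))
      (Ioi x) := by
  apply Integrable.mono' (dom_integrable hq₀ hint hx ‖u‖)
  · apply Continuous.aestronglyMeasurable
    exact ((Complex.continuous_exp.comp (continuous_const.mul
        (continuous_const.sub Complex.continuous_ofReal))).mul hq₀).mul
      ((wC_cont hq₀ hint).mul (u.continuous.snd))
  · rw [ae_restrict_iff' measurableSet_Ioi]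
    apply Filter.Eventually.of_forall
    intro y hy
    rw [norm_mul, norm_mul, norm_mul, wC_norm]
    have h1 := kernel_norm_le hk (le_of_lt hy)
    have h2 : ‖(u y).2‖ ≤ ‖u‖ := le_trans (norm_snd_le (u y)) (u.norm_coe_le_norm y)
    have h3 : (0:ℝ) ≤ Real.exp (2 * Q q₀ y) := (Real.exp_pos _).le
    calc ‖Complex.exp (-2 * I * k * ((x:ℂ) - (y:ℂ)))‖ * ‖q₀ y‖
          * (Real.exp (2 * Q q₀ y) * ‖(u y).2‖)
        ≤ 1 * ‖q₀ y‖ * (Real.exp (2 * Q q₀ y) * ‖u‖) := by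
          gcongr
      _ = ‖q₀ y‖ * Real.exp (2 * Q q₀ y) * ‖u‖ := by ring

lemma int_J2integrand (hq₀ : Continuous q₀) (hint : IntegrableOn q₀ (Ici 0))
    (u : X) {x : ℝ} (hx : 0 ≤ x) :
    IntegrableOn (fun y : ℝ => (starRingEnd ℂ) (q₀ y) * (wC q₀ y * (u y).1)) (Ioi x) := by
  apply Integrable.mono' (dom_integrable hq₀ hint hx ‖u‖)
  · apply Continuous.aestronglyMeasurable
    exact (RCLike.continuous_conj.comp hq₀).mul ((wC_cont hq₀ hint).mul (u.continuous.fst))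
  · rw [ae_restrict_iff' measurableSet_Ioi]
    apply Filter.Eventually.of_forall
    intro y hy
    rw [norm_mul, norm_mul, wC_norm, RCLike.norm_conj]
    have h2 : ‖(u y).1‖ ≤ ‖u‖ := le_trans (norm_fst_le (u y)) (u.norm_coe_le_norm y)
    have h3 : (0:ℝ) ≤ Real.exp (2 * Q q₀ y) := (Real.exp_pos _).le
    calc ‖q₀ y‖ * (Real.exp (2 * Q q₀ y) * ‖(u y).1‖)
        ≤ ‖q₀ y‖ * (Real.exp (2 * Q q₀ y) * ‖u‖) := by gcongr
      _ = ‖q₀ y‖ * Real.exp (2 * Q q₀ y) * ‖u‖ := by ring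

lemma int_g1 (hq₀ : Continuous q₀) (hint : IntegrableOn q₀ (Ici 0))
    {k : ℂ} (hk : 0 ≤ k.im) (u : X) :
    IntegrableOn (g1 q₀ k u) (Ioi 0) := by
  apply Integrable.mono' (dom_integrable hq₀ hint le_rfl ‖u‖)
  · apply Continuous.aestronglyMeasurable
    exact ((Complex.continuous_exp.comp (continuous_const.mul Complex.continuous_ofReal)).mul
      hq₀).mul ((wC_cont hq₀ hint).mul (u.continuous.snd))
  · rw [ae_restrict_iff' measurableSet_Ioi]
    apply Filter.Eventually.of_forall
    intro y hy
    simp only [g1]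
    rw [norm_mul, norm_mul, norm_mul, wC_norm]
    have h1 := E_norm_le hk (le_of_lt hy)
    have h2 : ‖(u y).2‖ ≤ ‖u‖ := le_trans (norm_snd_le (u y)) (u.norm_coe_le_norm y)
    have h3 : (0:ℝ) ≤ Real.exp (2 * Q q₀ y) := (Real.exp_pos _).le
    calc ‖Complex.exp (2 * I * k * (y:ℂ))‖ * ‖q₀ y‖ * (Real.exp (2 * Q q₀ y) * ‖(u y).2‖)
        ≤ 1 * ‖q₀ y‖ * (Real.exp (2 * Q q₀ y) * ‖u‖) := by gcongr
      _ = ‖q₀ y‖ * Real.exp (2 * Q q₀ y) * ‖u‖ := by ring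

lemma J1_split (q₀ : ℝ → ℂ) (k : ℂ) (u : X) (x : ℝ) :
    J1 q₀ k u x = Complex.exp (-2 * I * k * (x:ℂ)) * ∫ y in Ioi x, g1 q₀ k u y := by
  rw [J1, ← integral_const_mul]
  apply integral_congr_ae
  apply Filter.Eventually.of_forall
  intro y
  simp only [g1]
  rw [kernel_split]
  ring

lemma norm_J1_le (hq₀ : Continuous q₀) (hint : IntegrableOn q₀ (Ici 0))
    {k : ℂ} (hk : 0 ≤ k.im) (u : X) {x : ℝ} (hx : 0 ≤ x) :
    ‖J1 q₀ k u x‖ ≤ ‖u‖ * ((Real.exp (2 * Q q₀ x) - 1) / 2) := by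
  have hb : ‖J1 q₀ k u x‖ ≤ ∫ y in Ioi x, ‖q₀ y‖ * Real.exp (2 * Q q₀ y) * ‖u‖ := by
    apply norm_integral_le_of_norm_le (dom_integrable hq₀ hint hx ‖u‖)
    rw [ae_restrict_iff' measurableSet_Ioi]
    apply Filter.Eventually.of_forall
    intro y hy
    rw [norm_mul, norm_mul, norm_mul, wC_norm]
    have h1 := kernel_norm_le hk (le_of_lt hy)
    have h2 : ‖(u y).2‖ ≤ ‖u‖ := le_trans (norm_snd_le (u y)) (u.norm_coe_le_norm y)
    have h3 : (0:ℝ) ≤ Real.exp (2 * Q q₀ y) := (Real.exp_pos _).le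
    calc ‖Complex.exp (-2 * I * k * ((x:ℂ) - (y:ℂ)))‖ * ‖q₀ y‖
          * (Real.exp (2 * Q q₀ y) * ‖(u y).2‖)
        ≤ 1 * ‖q₀ y‖ * (Real.exp (2 * Q q₀ y) * ‖u‖) := by gcongr
      _ = ‖q₀ y‖ * Real.exp (2 * Q q₀ y) * ‖u‖ := by ring
  calc ‖J1 q₀ k u x‖ ≤ ∫ y in Ioi x, ‖q₀ y‖ * Real.exp (2 * Q q₀ y) * ‖u‖ := hb
    _ = (∫ y in Ioi x, ‖q₀ y‖ * Real.exp (2 * Q q₀ y)) * ‖u‖ := by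
        rw [integral_mul_const]
    _ = ‖u‖ * ((Real.exp (2 * Q q₀ x) - 1) / 2) := by
        rw [key_integral hq₀ hint hx]; ring

lemma norm_J2_le (hq₀ : Continuous q₀) (hint : IntegrableOn q₀ (Ici 0))
    (u : X) {x : ℝ} (hx : 0 ≤ x) :
    ‖J2 q₀ u x‖ ≤ ‖u‖ * ((Real.exp (2 * Q q₀ x) - 1) / 2) := by
  have hb : ‖J2 q₀ u x‖ ≤ ∫ y in Ioi x, ‖q₀ y‖ * Real.exp (2 * Q q₀ y) * ‖u‖ := by
    apply norm_integral_le_of_norm_le (dom_integrable hq₀ hint hx ‖u‖)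
    rw [ae_restrict_iff' measurableSet_Ioi]
    apply Filter.Eventually.of_forall
    intro y hy
    rw [norm_mul, norm_mul, wC_norm, RCLike.norm_conj]
    have h2 : ‖(u y).1‖ ≤ ‖u‖ := le_trans (norm_fst_le (u y)) (u.norm_coe_le_norm y)
    have h3 : (0:ℝ) ≤ Real.exp (2 * Q q₀ y) := (Real.exp_pos _).le
    calc ‖q₀ y‖ * (Real.exp (2 * Q q₀ y) * ‖(u y).1‖)
        ≤ ‖q₀ y‖ * (Real.exp (2 * Q q₀ y) * ‖u‖) := by gcongr
      _ = ‖q₀ y‖ * Real.exp (2 * Q q₀ y) * ‖u‖ := by ring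
  calc ‖J2 q₀ u x‖ ≤ ∫ y in Ioi x, ‖q₀ y‖ * Real.exp (2 * Q q₀ y) * ‖u‖ := hb
    _ = (∫ y in Ioi x, ‖q₀ y‖ * Real.exp (2 * Q q₀ y)) * ‖u‖ := by
        rw [integral_mul_const]
    _ = ‖u‖ * ((Real.exp (2 * Q q₀ x) - 1) / 2) := by
        rw [key_integral hq₀ hint hx]; ring

lemma J1_sub (hq₀ : Continuous q₀) (hint : IntegrableOn q₀ (Ici 0))
    {k : ℂ} (hk : 0 ≤ k.im) (u v : X) {x : ℝ} (hx : 0 ≤ x) :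
    J1 q₀ k u x - J1 q₀ k v x = J1 q₀ k (u - v) x := by
  rw [J1, J1, J1, ← integral_sub (int_J1integrand hq₀ hint hk u hx)
    (int_J1integrand hq₀ hint hk v hx)]
  apply integral_congr_ae
  apply Filter.Eventually.of_forall
  intro y
  simp only [BoundedContinuousFunction.coe_sub, Pi.sub_apply, Prod.snd_sub]
  ring

lemma J2_sub (hq₀ : Continuous q₀) (hint : IntegrableOn q₀ (Ici 0))
    (u v : X) {x : ℝ} (hx : 0 ≤ x) :
    J2 q₀ u x - J2 q₀ v x = J2 q₀ (u - v) x := by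
  rw [J2, J2, J2, ← integral_sub (int_J2integrand hq₀ hint u hx)
    (int_J2integrand hq₀ hint v hx)]
  apply integral_congr_ae
  apply Filter.Eventually.of_forall
  intro y
  simp only [BoundedContinuousFunction.coe_sub, Pi.sub_apply, Prod.fst_sub]
  ring

lemma J1_cont (hq₀ : Continuous q₀) (hint : IntegrableOn q₀ (Ici 0))
    {k : ℂ} (hk : 0 ≤ k.im) (u : X) :
    Continuous (fun x => J1 q₀ k u (max x 0)) := by
  have heq : (fun x => J1 q₀ k u (max x 0))
      = fun x => Complex.exp (-2 * I * k * ((max x 0 : ℝ) : ℂ))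
          * ∫ y in Ioi (max x 0), g1 q₀ k u y := by
    funext x
    exact J1_split q₀ k u (max x 0)
  rw [heq]
  apply Continuous.mul
  · exact Complex.continuous_exp.comp (continuous_const.mul
      (Complex.continuous_ofReal.comp (continuous_id.max continuous_const)))
  · apply cont_tail
    · exact ((Complex.continuous_exp.comp (continuous_const.mul
        Complex.continuous_ofReal)).mul hq₀).mul ((wC_cont hq₀ hint).mul (u.continuous.snd))
    · exact int_g1 hq₀ hint hk u

lemma J2_cont (hq₀ : Continuous q₀) (hint : IntegrableOn q₀ (Ici 0)) (u : X) :
    Continuous (fun x => J2 q₀ u (max x 0)) := by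
  apply cont_tail (F := fun y : ℝ => (starRingEnd ℂ) (q₀ y) * (wC q₀ y * (u y).1))
  · exact (RCLike.continuous_conj.comp hq₀).mul ((wC_cont hq₀ hint).mul (u.continuous.fst))
  · exact int_J2integrand hq₀ hint u le_rfl

/-! ### The contraction map -/

lemma weight_half {a D : ℝ} (ha : 0 ≤ a) (hD : 0 ≤ D) :
    Real.exp (-a) * (D * ((Real.exp a - 1) / 2)) ≤ D / 2 := by
  have hE : 1 ≤ Real.exp a := by
    calc (1:ℝ) = Real.exp 0 := Real.exp_zero.symm
      _ ≤ Real.exp a := Real.exp_le_exp.mpr ha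
  have hEpos : 0 < Real.exp a := Real.exp_pos a
  rw [Real.exp_neg, inv_mul_le_iff₀ hEpos]
  nlinarith

lemma wCinv_norm (q₀ : ℝ → ℂ) (x : ℝ) :
    ‖((Real.exp (-(2 * Q q₀ x)) : ℝ) : ℂ)‖ = Real.exp (-(2 * Q q₀ x)) := by
  rw [Complex.norm_real, Real.norm_eq_abs, abs_of_pos (Real.exp_pos _)]

noncomputable def Sfun (q₀ : ℝ → ℂ) (k lam : ℂ) (u : X) (x : ℝ) : ℂ × ℂ :=
  (((Real.exp (-(2 * Q q₀ x)) : ℝ) : ℂ) * (-(J1 q₀ k u (max x 0))),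
   ((Real.exp (-(2 * Q q₀ x)) : ℝ) : ℂ) * (1 - lam * J2 q₀ u (max x 0)))

lemma Sfun_cont (hq₀ : Continuous q₀) (hint : IntegrableOn q₀ (Ici 0))
    {k : ℂ} (hk : 0 ≤ k.im) (lam : ℂ) (u : X) :
    Continuous (Sfun q₀ k lam u) := by
  have hw : Continuous (fun x => ((Real.exp (-(2 * Q q₀ x)) : ℝ) : ℂ)) :=
    Complex.continuous_ofReal.comp ((continuous_const.mul (Q_cont hq₀ hint)).neg.rexp)
  apply Continuous.prodMk
  · exact hw.mul (J1_cont hq₀ hint hk u).neg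
  · exact hw.mul (continuous_const.sub (continuous_const.mul (J2_cont hq₀ hint u)))

lemma norm_Sfun_fst (hq₀ : Continuous q₀) (hint : IntegrableOn q₀ (Ici 0))
    {k : ℂ} (hk : 0 ≤ k.im) (lam : ℂ) (u : X) (x : ℝ) :
    ‖(Sfun q₀ k lam u x).1‖ ≤ ‖u‖ / 2 := by
  have hx0 : (0:ℝ) ≤ max x 0 := le_max_right x 0
  have ha : (0:ℝ) ≤ 2 * Q q₀ (max x 0) :=
    mul_nonneg (by norm_num) (Q_nonneg (q₀ := q₀) _)
  have h1 : ‖(Sfun q₀ k lam u x).1‖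
      = Real.exp (-(2 * Q q₀ x)) * ‖J1 q₀ k u (max x 0)‖ := by
    simp only [Sfun]
    rw [norm_mul, norm_neg, wCinv_norm]
  rw [h1, ← Q_max q₀ x]
  calc Real.exp (-(2 * Q q₀ (max x 0))) * ‖J1 q₀ k u (max x 0)‖
      ≤ Real.exp (-(2 * Q q₀ (max x 0)))
          * (‖u‖ * ((Real.exp (2 * Q q₀ (max x 0)) - 1) / 2)) :=
        mul_le_mul_of_nonneg_left (norm_J1_le hq₀ hint hk u hx0) (Real.exp_pos _).le
    _ ≤ ‖u‖ / 2 := weight_half ha (norm_nonneg u)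

lemma norm_Sfun_snd (hq₀ : Continuous q₀) (hint : IntegrableOn q₀ (Ici 0))
    {k : ℂ} (hk : 0 ≤ k.im) {lam : ℂ} (hlam : ‖lam‖ = 1) (u : X) (x : ℝ) :
    ‖(Sfun q₀ k lam u x).2‖ ≤ 1 + ‖u‖ / 2 := by
  have hx0 : (0:ℝ) ≤ max x 0 := le_max_right x 0
  have ha : (0:ℝ) ≤ 2 * Q q₀ (max x 0) :=
    mul_nonneg (by norm_num) (Q_nonneg (q₀ := q₀) _)
  have hne : Real.exp (-(2 * Q q₀ x)) ≤ 1 := by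
    rw [Real.exp_le_one_iff]
    have := Q_nonneg (q₀ := q₀) x
    linarith
  have htri : ‖1 - lam * J2 q₀ u (max x 0)‖ ≤ 1 + ‖J2 q₀ u (max x 0)‖ := by
    calc ‖1 - lam * J2 q₀ u (max x 0)‖ ≤ ‖(1:ℂ)‖ + ‖lam * J2 q₀ u (max x 0)‖ :=
          norm_sub_le _ _
      _ = 1 + ‖J2 q₀ u (max x 0)‖ := by rw [norm_mul, hlam, norm_one, one_mul]
  have h1 : ‖(Sfun q₀ k lam u x).2‖
      ≤ Real.exp (-(2 * Q q₀ x)) * (1 + ‖J2 q₀ u (max x 0)‖) := by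
    simp only [Sfun]
    rw [norm_mul, wCinv_norm]
    exact mul_le_mul_of_nonneg_left htri (Real.exp_pos _).le
  have h2 : Real.exp (-(2 * Q q₀ x)) * ‖J2 q₀ u (max x 0)‖ ≤ ‖u‖ / 2 := by
    rw [← Q_max q₀ x]
    calc Real.exp (-(2 * Q q₀ (max x 0))) * ‖J2 q₀ u (max x 0)‖
        ≤ Real.exp (-(2 * Q q₀ (max x 0)))
            * (‖u‖ * ((Real.exp (2 * Q q₀ (max x 0)) - 1) / 2)) :=
          mul_le_mul_of_nonneg_left (norm_J2_le hq₀ hint u hx0) (Real.exp_pos _).le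
      _ ≤ ‖u‖ / 2 := weight_half ha (norm_nonneg u)
  calc ‖(Sfun q₀ k lam u x).2‖ ≤ Real.exp (-(2 * Q q₀ x)) * (1 + ‖J2 q₀ u (max x 0)‖) := h1
    _ = Real.exp (-(2 * Q q₀ x)) * 1 + Real.exp (-(2 * Q q₀ x)) * ‖J2 q₀ u (max x 0)‖ := by
        ring
    _ ≤ 1 + ‖u‖ / 2 := add_le_add (by simpa using hne) h2

lemma norm_Sfun_le (hq₀ : Continuous q₀) (hint : IntegrableOn q₀ (Ici 0))
    {k : ℂ} (hk : 0 ≤ k.im) {lam : ℂ} (hlam : ‖lam‖ = 1) (u : X) (x : ℝ) :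
    ‖Sfun q₀ k lam u x‖ ≤ 1 + ‖u‖ / 2 := by
  rw [Prod.norm_def]
  apply max_le
  · have := norm_Sfun_fst hq₀ hint hk lam u x
    linarith
  · exact norm_Sfun_snd hq₀ hint hk hlam u x

noncomputable def T (hq₀ : Continuous q₀) (hint : IntegrableOn q₀ (Ici 0))
    {k : ℂ} (hk : 0 ≤ k.im) {lam : ℂ} (hlam : ‖lam‖ = 1) (u : X) : X :=
  BoundedContinuousFunction.ofNormedAddCommGroup (Sfun q₀ k lam u)
    (Sfun_cont hq₀ hint hk lam u) (1 + ‖u‖ / 2) (norm_Sfun_le hq₀ hint hk hlam u)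

lemma wC_mul_inv (q₀ : ℝ → ℂ) (x : ℝ) :
    wC q₀ x * ((Real.exp (-(2 * Q q₀ x)) : ℝ) : ℂ) = 1 := by
  rw [wC, ← Complex.ofReal_mul, ← Real.exp_add]
  norm_num

lemma Sfun_dist (hq₀ : Continuous q₀) (hint : IntegrableOn q₀ (Ici 0))
    {k : ℂ} (hk : 0 ≤ k.im) {lam : ℂ} (hlam : ‖lam‖ = 1) (u v : X) (x : ℝ) :
    dist (Sfun q₀ k lam u x) (Sfun q₀ k lam v x) ≤ 1/2 * dist u v := by
  have hx0 : (0:ℝ) ≤ max x 0 := le_max_right x 0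
  have ha : (0:ℝ) ≤ 2 * Q q₀ (max x 0) :=
    mul_nonneg (by norm_num) (Q_nonneg (q₀ := q₀) _)
  have hduv : dist u v = ‖u - v‖ := dist_eq_norm u v
  rw [Prod.dist_eq]
  apply max_le
  · rw [dist_eq_norm]
    have hdiff : (Sfun q₀ k lam u x).1 - (Sfun q₀ k lam v x).1
        = ((Real.exp (-(2 * Q q₀ x)) : ℝ) : ℂ) * (-(J1 q₀ k (u - v) (max x 0))) := by
      simp only [Sfun]
      rw [← J1_sub hq₀ hint hk u v hx0]
      ring
    rw [hdiff, norm_mul, wCinv_norm, ← Q_max q₀ x]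
    calc Real.exp (-(2 * Q q₀ (max x 0))) * ‖-(J1 q₀ k (u - v) (max x 0))‖
        ≤ Real.exp (-(2 * Q q₀ (max x 0)))
            * (‖u - v‖ * ((Real.exp (2 * Q q₀ (max x 0)) - 1) / 2)) := by
          apply mul_le_mul_of_nonneg_left _ (Real.exp_pos _).le
          rw [norm_neg]
          exact norm_J1_le hq₀ hint hk (u - v) hx0
      _ ≤ ‖u - v‖ / 2 := weight_half ha (norm_nonneg _)
      _ = 1/2 * dist u v := by rw [hduv]; ring
  · rw [dist_eq_norm]
    have hdiff : (Sfun q₀ k lam u x).2 - (Sfun q₀ k lam v x).2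
        = ((Real.exp (-(2 * Q q₀ x)) : ℝ) : ℂ) * (-(lam * J2 q₀ (u - v) (max x 0))) := by
      simp only [Sfun]
      rw [← J2_sub hq₀ hint u v hx0]
      ring
    rw [hdiff, norm_mul, wCinv_norm, norm_neg, norm_mul, hlam, one_mul, ← Q_max q₀ x]
    calc Real.exp (-(2 * Q q₀ (max x 0))) * ‖J2 q₀ (u - v) (max x 0)‖
        ≤ Real.exp (-(2 * Q q₀ (max x 0)))
            * (‖u - v‖ * ((Real.exp (2 * Q q₀ (max x 0)) - 1) / 2)) :=
          mul_le_mul_of_nonneg_left (norm_J2_le hq₀ hint (u - v) hx0) (Real.exp_pos _).le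
      _ ≤ ‖u - v‖ / 2 := weight_half ha (norm_nonneg _)
      _ = 1/2 * dist u v := by rw [hduv]; ring

lemma exists_unique_fixed (hq₀ : Continuous q₀) (hint : IntegrableOn q₀ (Ici 0))
    {k : ℂ} (hk : 0 ≤ k.im) {lam : ℂ} (hlam : ‖lam‖ = 1) :
    ∃ u : X, (∀ x, u x = Sfun q₀ k lam u x) ∧
      ∀ v : X, (∀ x, v x = Sfun q₀ k lam v x) → ∀ x, v x = u x := by
  have hcon : ContractingWith (1/2 : NNReal) (T hq₀ hint hk hlam) := by
    constructor
    · rw [← NNReal.coe_lt_coe]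
      norm_num
    · apply LipschitzWith.of_dist_le_mul
      intro u v
      have h0 : (0:ℝ) ≤ ((1/2 : NNReal) : ℝ) * dist u v := by positivity
      rw [BoundedContinuousFunction.dist_le h0]
      intro x
      simp only [T, BoundedContinuousFunction.coe_ofNormedAddCommGroup]
      refine le_trans (Sfun_dist hq₀ hint hk hlam u v x) (le_of_eq ?_)
      norm_num
  refine ⟨ContractingWith.fixedPoint (T hq₀ hint hk hlam) hcon, ?_, ?_⟩
  · intro x
    have hfix := hcon.fixedPoint_isFixedPt
    conv_lhs => rw [← hfix]
    simp only [T, BoundedContinuousFunction.coe_ofNormedAddCommGroup]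
  · intro v hv x
    have hvfix : Function.IsFixedPt (T hq₀ hint hk hlam) v := by
      apply BoundedContinuousFunction.ext
      intro y
      simp only [T, BoundedContinuousFunction.coe_ofNormedAddCommGroup]
      exact (hv y).symm
    rw [hcon.fixedPoint_unique hvfix]

end main
end VolterraNLS


open VolterraNLS

/-- Existence and uniqueness of bounded continuous solutions of the linear Volterra system
defining the NLS spectral functions: for `λ ∈ {1,-1}`, `Im k ≥ 0` and `q₀` continuous and
integrable on `[0,∞)`, there is exactly one pair of bounded continuous functions `(φ₁, φ₂)`
on `[0,∞)` with `φ₁(x) = -∫_x^∞ e^{-2ik(x-y)} q₀(y) φ₂(y) dy` and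
`φ₂(x) = 1 - λ ∫_x^∞ conj(q₀(y)) φ₁(y) dy` for all `x ≥ 0`. -/
theorem volterra_existence_uniqueness
    (lam : ℂ) (hlam : lam = 1 ∨ lam = -1) (k : ℂ) (hk : 0 ≤ k.im)
    (q₀ : ℝ → ℂ) (hq₀ : Continuous q₀) (hint : IntegrableOn q₀ (Ici 0)) :
    ∃ φ₁ φ₂ : ℝ → ℂ,
      (ContinuousOn φ₁ (Ici 0) ∧ ContinuousOn φ₂ (Ici 0) ∧
        (∃ M : ℝ, ∀ x : ℝ, 0 ≤ x → ‖φ₁ x‖ ≤ M ∧ ‖φ₂ x‖ ≤ M) ∧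
        (∀ x : ℝ, 0 ≤ x →
          φ₁ x = -∫ y in Ioi x,
              Complex.exp (-2 * Complex.I * k * ((x : ℂ) - (y : ℂ))) * q₀ y * φ₂ y ∧
          φ₂ x = 1 - lam * ∫ y in Ioi x, (starRingEnd ℂ) (q₀ y) * φ₁ y)) ∧
      (∀ ψ₁ ψ₂ : ℝ → ℂ,
        ContinuousOn ψ₁ (Ici 0) → ContinuousOn ψ₂ (Ici 0) →
        (∃ M : ℝ, ∀ x : ℝ, 0 ≤ x → ‖ψ₁ x‖ ≤ M ∧ ‖ψ₂ x‖ ≤ M) →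
        (∀ x : ℝ, 0 ≤ x →
          ψ₁ x = -∫ y in Ioi x,
              Complex.exp (-2 * Complex.I * k * ((x : ℂ) - (y : ℂ))) * q₀ y * ψ₂ y ∧
          ψ₂ x = 1 - lam * ∫ y in Ioi x, (starRingEnd ℂ) (q₀ y) * ψ₁ y) →
        EqOn ψ₁ φ₁ (Ici 0) ∧ EqOn ψ₂ φ₂ (Ici 0)) := by
  have hlam1 : ‖lam‖ = 1 := by rcases hlam with h | h <;> simp [h]
  obtain ⟨u, hufix, huniq⟩ := exists_unique_fixed hq₀ hint hk hlam1
  refine ⟨fun z => wC q₀ z * (u z).1, fun z => wC q₀ z * (u z).2, ⟨?_, ?_, ?_, ?_⟩, ?_⟩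
  · exact ((wC_cont hq₀ hint).mul (u.continuous.fst)).continuousOn
  · exact ((wC_cont hq₀ hint).mul (u.continuous.snd)).continuousOn
  · refine ⟨Real.exp (2 * Q q₀ 0) * ‖u‖, fun x hx => ⟨?_, ?_⟩⟩
    · calc ‖wC q₀ x * (u x).1‖ = Real.exp (2 * Q q₀ x) * ‖(u x).1‖ := by
            rw [norm_mul, wC_norm]
        _ ≤ Real.exp (2 * Q q₀ 0) * ‖u‖ :=
            mul_le_mul (Real.exp_le_exp.mpr (by have := Q_le_Q0 hint x; linarith))
              (le_trans (norm_fst_le (u x)) (u.norm_coe_le_norm x)) (norm_nonneg _)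
              (Real.exp_pos _).le
    · calc ‖wC q₀ x * (u x).2‖ = Real.exp (2 * Q q₀ x) * ‖(u x).2‖ := by
            rw [norm_mul, wC_norm]
        _ ≤ Real.exp (2 * Q q₀ 0) * ‖u‖ :=
            mul_le_mul (Real.exp_le_exp.mpr (by have := Q_le_Q0 hint x; linarith))
              (le_trans (norm_snd_le (u x)) (u.norm_coe_le_norm x)) (norm_nonneg _)
              (Real.exp_pos _).le
  · intro x hx
    have hu := hufix x
    have hmax : max x 0 = x := max_eq_left hx
    constructor
    · have h1 : (u x).1 = ((Real.exp (-(2 * Q q₀ x)) : ℝ) : ℂ) * (-(J1 q₀ k u x)) := by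
        have h := congrArg Prod.fst hu
        simp only [Sfun, hmax] at h
        exact h
      show wC q₀ x * (u x).1 = -(J1 q₀ k u x)
      rw [h1, ← mul_assoc, wC_mul_inv, one_mul]
    · have h2 : (u x).2 = ((Real.exp (-(2 * Q q₀ x)) : ℝ) : ℂ)
          * (1 - lam * J2 q₀ u x) := by
        have h := congrArg Prod.snd hu
        simp only [Sfun, hmax] at h
        exact h
      show wC q₀ x * (u x).2 = 1 - lam * J2 q₀ u x
      rw [h2, ← mul_assoc, wC_mul_inv, one_mul]
  · intro ψ₁ ψ₂ hc1 hc2 hbM heq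
    obtain ⟨M, hM⟩ := hbM
    have hwcont : Continuous (fun x => ((Real.exp (-(2 * Q q₀ x)) : ℝ) : ℂ)) :=
      Complex.continuous_ofReal.comp ((continuous_const.mul (Q_cont hq₀ hint)).neg.rexp)
    have hmaxc : Continuous (fun x : ℝ => max x 0) := continuous_id.max continuous_const
    have hmem : ∀ x : ℝ, max x 0 ∈ Ici (0:ℝ) := fun x => le_max_right x 0
    have hvcont : Continuous (fun x => (((Real.exp (-(2 * Q q₀ x)) : ℝ) : ℂ) * ψ₁ (max x 0),
        ((Real.exp (-(2 * Q q₀ x)) : ℝ) : ℂ) * ψ₂ (max x 0))) :=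
      (hwcont.mul (hc1.comp_continuous hmaxc hmem)).prodMk
        (hwcont.mul (hc2.comp_continuous hmaxc hmem))
    have hvb : ∀ x : ℝ, ‖((((Real.exp (-(2 * Q q₀ x)) : ℝ) : ℂ) * ψ₁ (max x 0),
        ((Real.exp (-(2 * Q q₀ x)) : ℝ) : ℂ) * ψ₂ (max x 0)) : ℂ × ℂ)‖ ≤ M := by
      intro x
      have hexp : Real.exp (-(2 * Q q₀ x)) ≤ 1 := by
        rw [Real.exp_le_one_iff]
        have := Q_nonneg (q₀ := q₀) x
        linarith
      rw [Prod.norm_def]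
      apply max_le
      · rw [norm_mul, wCinv_norm]
        calc Real.exp (-(2 * Q q₀ x)) * ‖ψ₁ (max x 0)‖
            ≤ 1 * M := mul_le_mul hexp (hM _ (hmem x)).1 (norm_nonneg _) zero_le_one
          _ = M := one_mul M
      · rw [norm_mul, wCinv_norm]
        calc Real.exp (-(2 * Q q₀ x)) * ‖ψ₂ (max x 0)‖
            ≤ 1 * M := mul_le_mul hexp (hM _ (hmem x)).2 (norm_nonneg _) zero_le_one
          _ = M := one_mul M
    set v : X := BoundedContinuousFunction.ofNormedAddCommGroup _ hvcont M hvb with hvdef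
    have hva : ∀ y : ℝ, v y = ((((Real.exp (-(2 * Q q₀ y)) : ℝ) : ℂ) * ψ₁ (max y 0),
        ((Real.exp (-(2 * Q q₀ y)) : ℝ) : ℂ) * ψ₂ (max y 0)) : ℂ × ℂ) := by
      intro y
      rw [hvdef]
      simp only [BoundedContinuousFunction.coe_ofNormedAddCommGroup]
    have hveq1 : ∀ t : ℝ, 0 ≤ t → J1 q₀ k v t
        = ∫ y in Ioi t, Complex.exp (-2 * Complex.I * k * ((t:ℂ) - (y:ℂ))) * q₀ y * ψ₂ y := by
      intro t ht
      simp only [J1]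
      apply setIntegral_congr_fun measurableSet_Ioi
      intro y hy
      have hy0 : (0:ℝ) ≤ y := le_of_lt (lt_of_le_of_lt ht hy)
      dsimp only
      rw [hva y]
      dsimp only
      rw [max_eq_left hy0, ← mul_assoc (wC q₀ y), wC_mul_inv, one_mul]
    have hveq2 : ∀ t : ℝ, 0 ≤ t → J2 q₀ v t
        = ∫ y in Ioi t, (starRingEnd ℂ) (q₀ y) * ψ₁ y := by
      intro t ht
      simp only [J2]
      apply setIntegral_congr_fun measurableSet_Ioi
      intro y hy
      have hy0 : (0:ℝ) ≤ y := le_of_lt (lt_of_le_of_lt ht hy)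
      dsimp only
      rw [hva y]
      dsimp only
      rw [max_eq_left hy0, ← mul_assoc (wC q₀ y), wC_mul_inv, one_mul]
    have hvfix : ∀ x, v x = Sfun q₀ k lam v x := by
      intro x
      have hx0 : (0:ℝ) ≤ max x 0 := le_max_right x 0
      rw [hva x]
      simp only [Sfun]
      rw [hveq1 _ hx0, hveq2 _ hx0, ← (heq (max x 0) hx0).1, ← (heq (max x 0) hx0).2]
    have hveq := huniq v hvfix
    constructor
    · intro x hx
      have hx0 : (0:ℝ) ≤ x := hx
      have h1 := congrArg Prod.fst (hveq x)
      rw [hva x] at h1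
      dsimp only at h1
      show ψ₁ x = wC q₀ x * (u x).1
      rw [← h1, max_eq_left hx0, ← mul_assoc, wC_mul_inv, one_mul]
    · intro x hx
      have hx0 : (0:ℝ) ≤ x := hx
      have h1 := congrArg Prod.snd (hveq x)
      rw [hva x] at h1
      dsimp only at h1
      show ψ₂ x = wC q₀ x * (u x).2
      rw [← h1, max_eq_left hx0, ← mul_assoc, wC_mul_inv, one_mul]
end
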